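/- Let n ≥ 1 and let α_1, …, α_n be positive integers. A subset C of ∏_{i=1}^n Z_{2^i}^{α_i} is a ∏_{i=1}^n Z_{2^i}-additive cyclic code if and only if, under the polynomial identification, C is a Z_{2^n}[x]-submodule of R_{α_1,…,α_n} = ∏_{i=1}^n Z_{2^i}[x]/⟨x^{α_i}−1⟩. -/

import Mathlib

open Polynomial

noncomputable section

/-- The ambient space `∏_{i=1}^n Z_{2^i}^{α_i}` (0-indexed: block `i` has entries in
`Z_{2^{i+1}}`). -/
abbrev Amb (n : ℕ) (α : Fin n → ℕ) := ∀ i : Fin n, Fin (α i) → ZMod (2 ^ (i.1 + 1))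

/-- The simultaneous cyclic shift `T`: each block is shifted cyclically,
`T(v)_{i,j} = v_{i,j-1}` (indices mod `α i`). -/
def shiftT {n : ℕ} {α : Fin n → ℕ} (v : Amb n α) : Amb n α :=
  fun i j => v i ((finRotate (α i)).symm j)

/-- The `i`-th component ring `Z_{2^{i+1}}[x]/⟨x^{α_i} − 1⟩` of `R_{α_1,…,α_n}`. -/
abbrev RqC (n : ℕ) (α : Fin n → ℕ) (i : Fin n) :=
  Polynomial (ZMod (2 ^ (i.1 + 1))) ⧸
    Ideal.span {(X : Polynomial (ZMod (2 ^ (i.1 + 1)))) ^ (α i) - 1}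

/-- `R_{α_1,…,α_n} = ∏_{i=1}^n Z_{2^i}[x]/⟨x^{α_i}−1⟩`. -/
abbrev Rq (n : ℕ) (α : Fin n → ℕ) := ∀ i : Fin n, RqC n α i

/-- The quotient projection `Z_{2^{i+1}}[x] → Z_{2^{i+1}}[x]/⟨x^{α_i} − 1⟩`. -/
def mkR (n : ℕ) (α : Fin n → ℕ) (i : Fin n) :
    Polynomial (ZMod (2 ^ (i.1 + 1))) →+* RqC n α i :=
  Ideal.Quotient.mk _

/-- The natural projection `Z_{2^n} → Z_{2^{i+1}}`. -/
def projZ (n : ℕ) (i : Fin n) : ZMod (2 ^ n) →+* ZMod (2 ^ (i.1 + 1)) :=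
  ZMod.castHom (pow_dvd_pow 2 i.isLt) (ZMod (2 ^ (i.1 + 1)))

/-- The scalar multiplication `d(x) * (u_1(x), …, u_n(x)) =
(d(x)u_1(x) mod 2, …, d(x)u_n(x) mod 2^n)` making `R_{α_1,…,α_n}` a
`Z_{2^n}[x]`-module. -/
def psmul {n : ℕ} {α : Fin n → ℕ} (d : Polynomial (ZMod (2 ^ n))) (u : Rq n α) :
    Rq n α :=
  fun i => mkR n α i (d.map (projZ n i)) * u i

/-- The polynomial identification `(v_1, …, v_n) ↦ (v_1(x), …, v_n(x))`,
`v_i(x) = Σ_j v_{i(j+1)} x^j`. -/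
def toPoly {n : ℕ} {α : Fin n → ℕ} (v : Amb n α) : Rq n α :=
  fun i => mkR n α i (∑ j : Fin (α i), Polynomial.monomial j.1 (v i j))

-- auxiliary lemmas

lemma toPoly_zero {n : ℕ} {α : Fin n → ℕ} : toPoly (0 : Amb n α) = 0 := by
  funext i
  simp [toPoly]

lemma toPoly_add {n : ℕ} {α : Fin n → ℕ} (u v : Amb n α) :
    toPoly (u + v) = toPoly u + toPoly v := by
  funext i
  show mkR n α i _ = mkR n α i _ + mkR n α i _
  rw [← map_add, ← Finset.sum_add_distrib]
  congr 1
  refine Finset.sum_congr rfl fun j _ => ?_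
  simp [map_add]

lemma mk_X_pow_eq_one {n : ℕ} {α : Fin n → ℕ} (i : Fin n) :
    (mkR n α i X) ^ (α i) = 1 := by
  have h : mkR n α i (X ^ (α i) - 1) = 0 :=
    Ideal.Quotient.eq_zero_iff_mem.mpr (Ideal.subset_span rfl)
  rw [map_sub, map_pow, map_one, sub_eq_zero] at h
  exact h

lemma mk_X_pow_mod {n : ℕ} {α : Fin n → ℕ} (i : Fin n) (a : ℕ) :
    (mkR n α i X) ^ a = (mkR n α i X) ^ (a % α i) := by
  conv_lhs => rw [← Nat.div_add_mod a (α i)]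
  rw [pow_add, pow_mul, mk_X_pow_eq_one, one_pow, one_mul]

lemma toPoly_injective {n : ℕ} {α : Fin n → ℕ} (hα : ∀ i, 0 < α i) :
    Function.Injective (toPoly (n := n) (α := α)) := by
  intro u v h
  funext i j
  have hi := congrFun h i
  haveI : Fact (1 < 2 ^ (i.1 + 1)) := ⟨Nat.one_lt_two_pow (by omega)⟩
  set p := ∑ j : Fin (α i), Polynomial.monomial j.1 (u i j) with hp
  set q := ∑ j : Fin (α i), Polynomial.monomial j.1 (v i j) with hq
  have hdvd : (X ^ (α i) - 1 : Polynomial (ZMod (2 ^ (i.1 + 1)))) ∣ p - q := by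
    rw [← Ideal.mem_span_singleton]
    exact Ideal.Quotient.eq.mp hi
  have hdegp : p.degree < (α i : WithBot ℕ) := by
    rw [hp]
    simpa [Polynomial.C_mul_X_pow_eq_monomial] using
      Polynomial.degree_sum_fin_lt (fun j : Fin (α i) => u i j)
  have hdegq : q.degree < (α i : WithBot ℕ) := by
    rw [hq]
    simpa [Polynomial.C_mul_X_pow_eq_monomial] using
      Polynomial.degree_sum_fin_lt (fun j : Fin (α i) => v i j)
  have hmonic : (X ^ (α i) - 1 : Polynomial (ZMod (2 ^ (i.1 + 1)))).Monic := by
    simpa using Polynomial.monic_X_pow_sub_C (1 : ZMod (2 ^ (i.1 + 1))) (hα i).ne'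
  have hdeg : ((X : Polynomial (ZMod (2 ^ (i.1 + 1)))) ^ (α i) - 1).degree = (α i : WithBot ℕ) := by
    simpa using Polynomial.degree_X_pow_sub_C (hα i) (1 : ZMod (2 ^ (i.1 + 1)))
  have hsub : (p - q).degree < ((X : Polynomial (ZMod (2 ^ (i.1 + 1)))) ^ (α i) - 1).degree := by
    rw [hdeg]
    exact lt_of_le_of_lt (Polynomial.degree_sub_le p q) (max_lt hdegp hdegq)
  have hpq : p = q := by
    have h1 : (p - q) %ₘ (X ^ (α i) - 1) = 0 :=
      (Polynomial.modByMonic_eq_zero_iff_dvd hmonic).mpr hdvd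
    have h2 : (p - q) %ₘ (X ^ (α i) - 1) = p - q :=
      (Polynomial.modByMonic_eq_self_iff hmonic).mpr hsub
    have := h2.symm.trans h1
    rwa [sub_eq_zero] at this
  have hc := congrArg (fun r => Polynomial.coeff r j.1) hpq
  simp only [hp, hq, Polynomial.finset_sum_coeff, Polynomial.coeff_monomial] at hc
  simp only [Fin.val_eq_val] at hc
  rwa [Finset.sum_ite_eq' Finset.univ j, Finset.sum_ite_eq' Finset.univ j,
    if_pos (Finset.mem_univ j), if_pos (Finset.mem_univ j)] at hc

lemma finRotate_val' {m : ℕ} (hm : 0 < m) (k : Fin m) :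
    ((finRotate m) k).1 = (k.1 + 1) % m := by
  obtain ⟨m', rfl⟩ := Nat.exists_eq_succ_of_ne_zero hm.ne'
  rw [finRotate_succ_apply, Fin.val_add, Fin.val_one', Nat.add_mod k.1 1,
    Nat.mod_eq_of_lt k.isLt]

lemma psmul_X_toPoly {n : ℕ} {α : Fin n → ℕ} (hα : ∀ i, 0 < α i) (v : Amb n α) :
    psmul X (toPoly v) = toPoly (shiftT v) := by
  funext i
  show mkR n α i (Polynomial.map (projZ n i) X) * mkR n α i _ = mkR n α i _
  have hr : (∑ j : Fin (α i), monomial j.1 (shiftT v i j))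
      = ∑ k : Fin (α i), monomial ((finRotate (α i)) k).1 (v i k) :=
    Fintype.sum_equiv (finRotate (α i)).symm _ _ (fun j => by simp only [shiftT, Equiv.apply_symm_apply])
  rw [Polynomial.map_X, ← map_mul, Finset.mul_sum, hr, map_sum, map_sum]
  refine Finset.sum_congr rfl fun k _ => ?_
  have hx : (X : Polynomial (ZMod (2 ^ (i.1 + 1)))) * (C (v i k) * X ^ k.1)
      = C (v i k) * X ^ (k.1 + 1) := by ring
  rw [← C_mul_X_pow_eq_monomial, ← C_mul_X_pow_eq_monomial, hx, map_mul, map_mul,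
    map_pow, map_pow, mk_X_pow_mod i (k.1 + 1), finRotate_val' (hα i) k]

lemma psmul_add_left {n : ℕ} {α : Fin n → ℕ} (p q : Polynomial (ZMod (2 ^ n)))
    (u : Rq n α) : psmul (p + q) u = psmul p u + psmul q u := by
  funext i
  simp [psmul, Polynomial.map_add, map_add, add_mul]

lemma psmul_mul_X {n : ℕ} {α : Fin n → ℕ} (p : Polynomial (ZMod (2 ^ n)))
    (u : Rq n α) : psmul (p * X) u = psmul p (psmul X u) := by
  funext i
  simp only [psmul, Polynomial.map_mul, map_mul, Pi.mul_apply]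
  ring

lemma psmul_C' {n : ℕ} {α : Fin n → ℕ} (a : ZMod (2 ^ n)) (u : Rq n α) :
    psmul (Polynomial.C a) u = a.val • u := by
  funext i
  haveI : NeZero (2 ^ n) := ⟨(Nat.pos_of_ne_zero (by positivity)).ne'⟩
  show mkR n α i _ * u i = a.val • u i
  rw [Polynomial.map_C, projZ, ZMod.castHom_apply, ← ZMod.natCast_val,
    Polynomial.C_eq_natCast, map_natCast, nsmul_eq_mul]

lemma psmul_neg_one {n : ℕ} {α : Fin n → ℕ} (u : Rq n α) :
    psmul (-1 : Polynomial (ZMod (2 ^ n))) u = -u := by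
  funext i
  show mkR n α i _ * u i = -u i
  rw [Polynomial.map_neg, Polynomial.map_one, map_neg, map_one]
  ring

/-- `C` is a `∏ Z_{2^i}`-additive cyclic code (an additive subgroup
closed under the simultaneous shift `T`) iff, under the polynomial identification,
`C` is a `Z_{2^n}[x]`-submodule of `R_{α_1,…,α_n}`. -/
theorem stmt_0 (n : ℕ) (hn : 1 ≤ n) (α : Fin n → ℕ) (hα : ∀ i, 0 < α i)
    (C : Set (Amb n α)) :
    ((0 ∈ C) ∧ (∀ u v, u ∈ C → v ∈ C → u + v ∈ C) ∧ (∀ u, u ∈ C → -u ∈ C) ∧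
      (∀ u, u ∈ C → shiftT u ∈ C)) ↔
    ((0 ∈ toPoly '' C) ∧
      (∀ u v, u ∈ toPoly '' C → v ∈ toPoly '' C → u + v ∈ toPoly '' C) ∧
      (∀ (d : Polynomial (ZMod (2 ^ n))) u, u ∈ toPoly '' C → psmul d u ∈ toPoly '' C)) := by
  constructor
  · rintro ⟨h0, hadd, hneg, hT⟩
    have hS0 : (0 : Rq n α) ∈ toPoly '' C := ⟨0, h0, toPoly_zero⟩
    have hSadd : ∀ u v, u ∈ toPoly '' C → v ∈ toPoly '' C → u + v ∈ toPoly '' C := by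
      rintro _ _ ⟨a, ha, rfl⟩ ⟨b, hb, rfl⟩
      exact ⟨a + b, hadd a b ha hb, toPoly_add a b⟩
    have hnsmul : ∀ (m : ℕ) (u : Rq n α), u ∈ toPoly '' C → m • u ∈ toPoly '' C := by
      intro m
      induction m with
      | zero => intro u _; simpa using hS0
      | succ m ih =>
          intro u hu
          rw [succ_nsmul]
          exact hSadd _ _ (ih u hu) hu
    refine ⟨hS0, hSadd, ?_⟩
    intro d
    induction d using Polynomial.induction_on with
    | C a =>
        intro u hu
        rw [psmul_C']
        exact hnsmul _ _ hu
    | add p q hp hq =>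
        intro u hu
        rw [psmul_add_left]
        exact hSadd _ _ (hp u hu) (hq u hu)
    | monomial k a ih =>
        intro u hu
        rw [pow_succ, ← mul_assoc, psmul_mul_X]
        refine ih _ ?_
        obtain ⟨v, hv, rfl⟩ := hu
        rw [psmul_X_toPoly hα]
        exact ⟨shiftT v, hT v hv, rfl⟩
  · rintro ⟨h0, hadd, hsmul⟩
    have hinj := toPoly_injective (n := n) (α := α) hα
    have hmem : ∀ w : Amb n α, toPoly w ∈ toPoly '' C → w ∈ C := by
      rintro w ⟨a, ha, he⟩
      rwa [← hinj he]
    refine ⟨?_, ?_, ?_, ?_⟩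
    · refine hmem 0 ?_
      rw [toPoly_zero]; exact h0
    · intro u v hu hv
      refine hmem (u + v) ?_
      rw [toPoly_add]
      exact hadd _ _ ⟨u, hu, rfl⟩ ⟨v, hv, rfl⟩
    · intro u hu
      refine hmem (-u) ?_
      have := hsmul (-1) (toPoly u) ⟨u, hu, rfl⟩
      rw [psmul_neg_one] at this
      have he : toPoly (-u) = -toPoly u := by
        have h2 := toPoly_add u (-u)
        rw [add_neg_cancel, toPoly_zero] at h2
        exact eq_neg_of_add_eq_zero_right h2.symm
      rw [he]; exact this
    · intro u hu
      refine hmem (shiftT u) ?_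
      rw [← psmul_X_toPoly hα]
      exact hsmul X (toPoly u) ⟨u, hu, rfl⟩
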